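/- The point (a,b,c) = (1/√2, −1/√2, 0) satisfies a² + b² + c² = 1 and |I₆(1/√2, −1/√2, 0)| = 1/18, i.e., the state (|v₁⟩ − |v₂⟩)/√2 attains the global maximum of |I₆| on the unit sphere. -/

import Mathlib

/-- Restriction of the degree-6 fundamental invariant to normalized semi-simple states. -/
noncomputable def I₆ (a b c : ℝ) : ℝ :=
  (1 / 27) * (a ^ 6 - 10 * a ^ 3 * b ^ 3 - 10 * a ^ 3 * c ^ 3 + b ^ 6 -
    10 * b ^ 3 * c ^ 3 + c ^ 6)

/-- The state `(|v₁⟩ - |v₂⟩)/√2` attains the global maximum `1/18` of `|I₆|`. -/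
theorem I₆_attains_max :
    (1 / Real.sqrt 2) ^ 2 + (-(1 / Real.sqrt 2)) ^ 2 + (0 : ℝ) ^ 2 = 1 ∧
      |I₆ (1 / Real.sqrt 2) (-(1 / Real.sqrt 2)) 0| = 1 / 18 := by
  have h2 : Real.sqrt 2 ^ 2 = 2 := Real.sq_sqrt (by norm_num)
  have hne : Real.sqrt 2 ≠ 0 := by positivity
  constructor
  · field_simp; rw [h2]; norm_num
  · have : I₆ (1 / Real.sqrt 2) (-(1 / Real.sqrt 2)) 0 = 1 / 18 := by
      unfold I₆
      have h6 : Real.sqrt 2 ^ 6 = 8 := by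
        have : Real.sqrt 2 ^ 6 = (Real.sqrt 2 ^ 2) ^ 3 := by ring
        rw [this, h2]; norm_num
      field_simp
      have h33 : Real.sqrt 2 ^ 3 * Real.sqrt 2 ^ 3 = 8 := by
        have : Real.sqrt 2 ^ 3 * Real.sqrt 2 ^ 3 = (Real.sqrt 2 ^ 2) ^ 3 := by ring
        rw [this, h2]; norm_num
      rw [h6]; norm_num
    rw [this]
    norm_num
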